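/- Let S be an epsilon-strongly G-graded ring and N a normal subgroup of G. For each coset C ∈ G/N, the set E_C = join-closure of {ε_g : g ∈ C} is a set of local units for the ring S_C S_{C^{-1}}. In particular, the induced G/N-grading of S is essentially epsilon-strong. -/
import Mathlib


/-- The additive subgroup generated by all products `u * v` with `u ∈ U`, `v ∈ V`. -/
def mulSub {S : Type*} [NonUnitalRing S] (U V : AddSubgroup S) : AddSubgroup S :=
  AddSubgroup.closure (Set.image2 (· * ·) (U : Set S) (V : Set S))

/-- `comp` is a `G`-grading of the ring `S`: the components form an internal direct sum
and `S_g S_h ⊆ S_{gh}`. -/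
def IsGrading {G : Type*} [Group G] [DecidableEq G] {S : Type*} [NonUnitalRing S]
    (comp : G → AddSubgroup S) : Prop :=
  DirectSum.IsInternal comp ∧
    ∀ g h : G, ∀ a ∈ comp g, ∀ b ∈ comp h, a * b ∈ comp (g * h)

/-- The grading `comp` is epsilon-strong: for every `g` there are `ε_g ∈ S_g S_{g⁻¹}` and
`ε'_g ∈ S_{g⁻¹} S_g` with `ε_g s = s = s ε'_g` for all `s ∈ S_g`. -/
def EpsilonStrong {G : Type*} [Group G] {S : Type*} [NonUnitalRing S]
    (comp : G → AddSubgroup S) : Prop :=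
  ∀ g : G, ∃ ε ∈ mulSub (comp g) (comp g⁻¹), ∃ ε' ∈ mulSub (comp g⁻¹) (comp g),
    ∀ s ∈ comp g, ε * s = s ∧ s * ε' = s

/-- The component `S_C = ⊕_{g ∈ C} S_g` of the induced `G/N`-grading. -/
def indComp {G : Type*} [Group G] {S : Type*} [NonUnitalRing S]
    (comp : G → AddSubgroup S) (N : Subgroup G) (C : G ⧸ N) : AddSubgroup S :=
  ⨆ g : {g : G // (g : G ⧸ N) = C}, comp g.1

/-- The closure of a set `A` under the join operation `a ∨ b = a + b - a*b`. -/
inductive JoinClosure {S : Type*} [NonUnitalRing S] (A : Set S) : S → Prop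
  | base {x : S} : x ∈ A → JoinClosure A x
  | join {x y : S} : JoinClosure A x → JoinClosure A y → JoinClosure A (x + y - x * y)

/-- `E` is a set of local units for (the ring with underlying additive group) `T`:
a join-closed set of commuting idempotents contained in `T` such that every element of `T`
has a local unit in `E`. -/
def IsLocalUnitsFor {S : Type*} [NonUnitalRing S] (T : AddSubgroup S) (E : Set S) : Prop :=
  (∀ e ∈ E, e ∈ T) ∧ (∀ e ∈ E, e * e = e) ∧ (∀ e ∈ E, ∀ f ∈ E, e * f = f * e) ∧
  (∀ e ∈ E, ∀ f ∈ E, e + f - e * f ∈ E) ∧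
  (∀ r ∈ T, ∃ f ∈ E, f * r = r ∧ r * f = r)

section AuxLemmas

variable {S : Type*} [NonUnitalRing S]

theorem mul_mem_mulSub {U V : AddSubgroup S} {a b : S} (ha : a ∈ U) (hb : b ∈ V) :
    a * b ∈ mulSub U V :=
  AddSubgroup.subset_closure ⟨a, ha, b, hb, rfl⟩

theorem mulSub_le {U V W : AddSubgroup S}
    (h : ∀ a ∈ U, ∀ b ∈ V, a * b ∈ W) : mulSub U V ≤ W := by
  refine (AddSubgroup.closure_le W).mpr ?_
  rintro x ⟨a, ha, b, hb, rfl⟩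
  exact h a ha b hb

theorem mulSub_induction {U V : AddSubgroup S} {P : S → Prop} {x : S}
    (hx : x ∈ mulSub U V)
    (mul : ∀ a ∈ U, ∀ b ∈ V, P (a * b)) (zero : P 0)
    (add : ∀ x y, P x → P y → P (x + y)) (neg : ∀ x, P x → P (-x)) : P x := by
  refine AddSubgroup.closure_induction (p := fun y _ => P y) ?_ zero
    (fun u v _ _ hu hv => add u v hu hv) (fun u _ hu => neg u hu) hx
  rintro y ⟨a, ha, b, hb, rfl⟩
  exact mul a ha b hb

variable {G : Type*} [Group G]

theorem comp_le_indComp (comp : G → AddSubgroup S) (N : Subgroup G) {g : G} {C : G ⧸ N}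
    (h : (g : G ⧸ N) = C) : comp g ≤ indComp comp N C :=
  le_iSup (fun i : {g : G // (g : G ⧸ N) = C} => comp i.1) ⟨g, h⟩

theorem indComp_induction (comp : G → AddSubgroup S) (N : Subgroup G) {C : G ⧸ N}
    {P : S → Prop} {x : S} (hx : x ∈ indComp comp N C)
    (mem : ∀ g : G, (g : G ⧸ N) = C → ∀ y ∈ comp g, P y)
    (zero : P 0) (add : ∀ x y, P x → P y → P (x + y)) : P x :=
  AddSubgroup.iSup_induction (C := P) _ hx (fun i y hy => mem i.1 i.2 y hy) zero add

theorem indComp_mul {comp : G → AddSubgroup S}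
    (hmul : ∀ g h : G, ∀ a ∈ comp g, ∀ b ∈ comp h, a * b ∈ comp (g * h))
    (N : Subgroup G) [N.Normal] {C D : G ⧸ N} {a b : S}
    (ha : a ∈ indComp comp N C) (hb : b ∈ indComp comp N D) :
    a * b ∈ indComp comp N (C * D) := by
  refine indComp_induction comp N (P := fun a => a * b ∈ indComp comp N (C * D)) ha ?_ ?_ ?_
  · intro g hg y hy
    refine indComp_induction comp N (P := fun b => y * b ∈ indComp comp N (C * D)) hb ?_ ?_ ?_
    · intro h hh z hz
      exact comp_le_indComp comp N (C := C * D) (g := g * h) (by rw [← hg, ← hh]; rfl)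
        (hmul g h y hy z hz)
    · beta_reduce; rw [mul_zero]; exact zero_mem _
    · intro u v hu hv; beta_reduce at hu hv ⊢; rw [mul_add]; exact add_mem hu hv
  · beta_reduce; rw [zero_mul]; exact zero_mem _
  · intro u v hu hv; beta_reduce at hu hv ⊢; rw [add_mul]; exact add_mem hu hv

theorem join_idem {x y : S} (hx : x * x = x) (hy : y * y = y) (hc : x * y = y * x) :
    (x + y - x * y) * (x + y - x * y) = x + y - x * y := by
  have h1 : x * (x * y) = x * y := by rw [← mul_assoc, hx]
  have h2 : x * y * y = x * y := by rw [mul_assoc, hy]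
  have h3 : y * (x * y) = x * y := by rw [← mul_assoc, ← hc, mul_assoc, hy]
  have h4 : x * y * x = x * y := by rw [mul_assoc, ← hc, ← mul_assoc, hx]
  have e1 : x * (x + y - x * y) = x := by rw [mul_sub, mul_add, hx, h1]; abel
  have e2 : y * (x + y - x * y) = y := by rw [mul_sub, mul_add, hy, h3, ← hc]; abel
  have e3 : x * y * (x + y - x * y) = x * y := by
    have h5 : x * y * (x * y) = x * y := by
      calc x * y * (x * y) = x * y * x * y := by rw [mul_assoc (x*y) x y]
        _ = x * y * y := by rw [h4]
        _ = x * y := h2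
    rw [mul_sub, mul_add, h4, h2, h5]; abel
  rw [sub_mul, add_mul, e1, e2, e3]

theorem join_comm_mul {x y s : S} (hxs : x * s = s * x) (hys : y * s = s * y) :
    (x + y - x * y) * s = s * (x + y - x * y) := by
  have hxy : x * y * s = s * (x * y) := by
    rw [mul_assoc, hys, ← mul_assoc, hxs, mul_assoc]
  rw [sub_mul, add_mul, hxs, hys, hxy, mul_sub, mul_add]

theorem join_left_unit {f₁ f₂ a : S} (hc : f₁ * f₂ = f₂ * f₁) (h : f₁ * a = a ∨ f₂ * a = a) :
    (f₁ + f₂ - f₁ * f₂) * a = a := by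
  rw [sub_mul, add_mul]
  rcases h with h | h
  · rw [hc, mul_assoc, h]; abel
  · rw [mul_assoc, h]; abel

theorem join_right_unit {f₁ f₂ a : S} (hc : f₁ * f₂ = f₂ * f₁) (h : a * f₁ = a ∨ a * f₂ = a) :
    a * (f₁ + f₂ - f₁ * f₂) = a := by
  rw [mul_sub, mul_add]
  rcases h with h | h
  · rw [← mul_assoc, h]; abel
  · rw [hc, ← mul_assoc, h]; abel

end AuxLemmas

/-- Let `S` be epsilon-strongly `G`-graded with epsilons `ε_g`, and `N ◃ G`. Then for each
coset `C ∈ G/N`, the join-closure `E_C` of `{ε_g : g ∈ C}` is a set of local units for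
`S_C S_{C⁻¹}`; in particular the induced `G/N`-grading is essentially epsilon-strong
(symmetric with each `S_C S_{C⁻¹}` having a set of local units). -/
theorem stmt14 {G : Type*} [Group G] [DecidableEq G] {S : Type*} [NonUnitalRing S]
    (comp : G → AddSubgroup S) (hgr : IsGrading comp) (ε : G → S)
    (hε : ∀ g : G, ε g ∈ mulSub (comp g) (comp g⁻¹) ∧
      ∀ s ∈ comp g, ε g * s = s ∧ s * ε g⁻¹ = s)
    (N : Subgroup G) [N.Normal] :
    ∀ C : G ⧸ N,
      IsLocalUnitsFor (mulSub (indComp comp N C) (indComp comp N C⁻¹))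
        {x | JoinClosure {y | ∃ g : G, (g : G ⧸ N) = C ∧ y = ε g} x} ∧
      mulSub (mulSub (indComp comp N C) (indComp comp N C⁻¹)) (indComp comp N C) =
        indComp comp N C := by
  obtain ⟨-, hmul⟩ := hgr
  intro C
  set gen : Set S := {y | ∃ g : G, (g : G ⧸ N) = C ∧ y = ε g} with hgen
  set A := indComp comp N C with hA
  set B := indComp comp N C⁻¹ with hB
  set T := mulSub A B with hT
  -- basic facts about the epsilons
  have hεmem : ∀ g : G, ε g ∈ mulSub (comp g) (comp g⁻¹) := fun g => (hε g).1
  have hεleft : ∀ g : G, ∀ s ∈ comp g, ε g * s = s := fun g s hs => ((hε g).2 s hs).1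
  have hεright : ∀ g : G, ∀ s ∈ comp g⁻¹, s * ε g = s := by
    intro g s hs
    have h := ((hε g⁻¹).2 s hs).2
    rwa [inv_inv] at h
  have hεone : ∀ g : G, ε g ∈ comp 1 := by
    intro g
    refine mulSub_le (fun a ha b hb => ?_) (hεmem g)
    have h := hmul g g⁻¹ a ha b hb
    rwa [mul_inv_cancel] at h
  have hIleft : ∀ g : G, ∀ x ∈ mulSub (comp g) (comp g⁻¹), ε g * x = x := by
    intro g x hx
    refine mulSub_induction (P := fun x => ε g * x = x) hx (fun a ha b hb => ?_) ?_
      (fun u v hu hv => ?_) (fun u hu => ?_) <;> beta_reduce at *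
    · rw [← mul_assoc, hεleft g a ha]
    · exact mul_zero _
    · rw [mul_add, hu, hv]
    · rw [mul_neg, hu]
  have hIright : ∀ g : G, ∀ x ∈ mulSub (comp g) (comp g⁻¹), x * ε g = x := by
    intro g x hx
    refine mulSub_induction (P := fun x => x * ε g = x) hx (fun a ha b hb => ?_) ?_
      (fun u v hu hv => ?_) (fun u hu => ?_) <;> beta_reduce at *
    · rw [mul_assoc, hεright g b hb]
    · exact zero_mul _
    · rw [add_mul, hu, hv]
    · rw [neg_mul, hu]
  have hεidem : ∀ g : G, ε g * ε g = ε g := fun g => hIleft g _ (hεmem g)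
  have hεcomm : ∀ g : G, ∀ s ∈ comp (1 : G), ε g * s = s * ε g := by
    intro g s hs
    have h1 : ε g * s ∈ mulSub (comp g) (comp g⁻¹) := by
      refine mulSub_induction (P := fun x => x * s ∈ mulSub (comp g) (comp g⁻¹)) (hεmem g)
        (fun a ha b hb => ?_) ?_ (fun u v hu hv => ?_) (fun u hu => ?_) <;> beta_reduce at *
      · rw [mul_assoc]
        have hb' : b * s ∈ comp g⁻¹ := by
          have h := hmul g⁻¹ 1 b hb s hs
          rwa [mul_one] at h
        exact mul_mem_mulSub ha hb'
      · rw [zero_mul]; exact zero_mem _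
      · rw [add_mul]; exact add_mem hu hv
      · rw [neg_mul]; exact neg_mem hu
    have h2 : s * ε g ∈ mulSub (comp g) (comp g⁻¹) := by
      refine mulSub_induction (P := fun x => s * x ∈ mulSub (comp g) (comp g⁻¹)) (hεmem g)
        (fun a ha b hb => ?_) ?_ (fun u v hu hv => ?_) (fun u hu => ?_) <;> beta_reduce at *
      · rw [← mul_assoc]
        have ha' : s * a ∈ comp g := by
          have h := hmul 1 g s hs a ha
          rwa [one_mul] at h
        exact mul_mem_mulSub ha' hb
      · rw [mul_zero]; exact zero_mem _
      · rw [mul_add]; exact add_mem hu hv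
      · rw [mul_neg]; exact neg_mem hu
    calc ε g * s = ε g * s * ε g := (hIright g _ h1).symm
      _ = ε g * (s * ε g) := mul_assoc _ _ _
      _ = s * ε g := hIleft g _ h2
  -- relating components with the induced grading
  have hcompC : ∀ g : G, (g : G ⧸ N) = C → comp g ≤ A := fun g hg => comp_le_indComp comp N hg
  have hcompCinv : ∀ g : G, (g : G ⧸ N) = C → comp g⁻¹ ≤ B := fun g hg =>
    comp_le_indComp comp N (by rw [← hg]; rfl)
  have hεT : ∀ g : G, (g : G ⧸ N) = C → ε g ∈ T := fun g hg =>
    mulSub_le (fun a ha b hb => mul_mem_mulSub (hcompC g hg ha) (hcompCinv g hg hb)) (hεmem g)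
  have hcomp1le : comp (1 : G) ≤ indComp comp N 1 := comp_le_indComp comp N rfl
  have hTsub1 : T ≤ indComp comp N 1 := by
    refine mulSub_le fun a ha b hb => ?_
    have h := indComp_mul hmul N ha hb
    rwa [mul_inv_cancel] at h
  have hTleft : ∀ x ∈ comp (1 : G), ∀ y ∈ T, x * y ∈ T := by
    intro x hx y hy
    refine mulSub_induction (P := fun y => x * y ∈ T) hy (fun a ha b hb => ?_) ?_
      (fun u v hu hv => ?_) (fun u hu => ?_) <;> beta_reduce at *
    · rw [← mul_assoc]
      have hxa : x * a ∈ A := by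
        have h := indComp_mul hmul N (hcomp1le hx) ha
        rwa [one_mul] at h
      exact mul_mem_mulSub hxa hb
    · rw [mul_zero]; exact zero_mem _
    · rw [mul_add]; exact add_mem hu hv
    · rw [mul_neg]; exact neg_mem hu
  -- the key invariant for elements of the join closure E
  have hE : ∀ x, JoinClosure gen x →
      x ∈ comp (1 : G) ∧ x ∈ T ∧ (∀ s ∈ comp (1 : G), x * s = s * x) ∧ x * x = x := by
    intro x hx
    induction hx with
    | @base x h =>
      obtain ⟨g, hg, rfl⟩ := h
      exact ⟨hεone g, hεT g hg, hεcomm g, hεidem g⟩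
    | @join x y hx hy ihx ihy =>
      obtain ⟨hx1, hxT, hxc, hxi⟩ := ihx
      obtain ⟨hy1, hyT, hyc, hyi⟩ := ihy
      have hxy1 : x * y ∈ comp (1 : G) := by
        have h := hmul 1 1 x hx1 y hy1
        rwa [one_mul] at h
      exact ⟨sub_mem (add_mem hx1 hy1) hxy1,
        sub_mem (add_mem hxT hyT) (hTleft x hx1 y hyT),
        fun s hs => join_comm_mul (hxc s hs) (hyc s hs),
        join_idem hxi hyi (hxc y hy1)⟩
  have hcomm2 : ∀ f₁, JoinClosure gen f₁ → ∀ f₂, JoinClosure gen f₂ → f₁ * f₂ = f₂ * f₁ :=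
    fun f₁ h₁ f₂ h₂ => (hE f₁ h₁).2.2.1 f₂ (hE f₂ h₂).1
  obtain ⟨g₀, hg₀⟩ := QuotientGroup.mk_surjective C
  have hg₀gen : ε g₀ ∈ gen := ⟨g₀, hg₀, rfl⟩
  -- left local units for A
  have hL : ∀ a ∈ A, ∃ f, JoinClosure gen f ∧ f * a = a := by
    intro a ha
    refine indComp_induction comp N (P := fun a => ∃ f, JoinClosure gen f ∧ f * a = a) ha
      ?_ ?_ ?_
    · intro g hg y hy
      exact ⟨ε g, .base ⟨g, hg, rfl⟩, hεleft g y hy⟩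
    · exact ⟨ε g₀, .base hg₀gen, mul_zero _⟩
    · rintro u v ⟨f₁, hf₁, h₁⟩ ⟨f₂, hf₂, h₂⟩
      have hc := hcomm2 f₁ hf₁ f₂ hf₂
      refine ⟨f₁ + f₂ - f₁ * f₂, .join hf₁ hf₂, ?_⟩
      beta_reduce
      rw [mul_add, join_left_unit hc (Or.inl h₁), join_left_unit hc (Or.inr h₂)]
  -- right local units for B
  have hR : ∀ b ∈ B, ∃ f, JoinClosure gen f ∧ b * f = b := by
    intro b hb
    refine indComp_induction comp N (P := fun b => ∃ f, JoinClosure gen f ∧ b * f = b) hb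
      ?_ ?_ ?_
    · intro h hh y hy
      refine ⟨ε h⁻¹, .base ⟨h⁻¹, ?_, rfl⟩, hεright h⁻¹ y (by rw [inv_inv]; exact hy)⟩
      rw [show ((h⁻¹ : G) : G ⧸ N) = ((h : G ⧸ N))⁻¹ from rfl, hh, inv_inv]
    · exact ⟨ε g₀, .base hg₀gen, zero_mul _⟩
    · rintro u v ⟨f₁, hf₁, h₁⟩ ⟨f₂, hf₂, h₂⟩
      have hc := hcomm2 f₁ hf₁ f₂ hf₂
      refine ⟨f₁ + f₂ - f₁ * f₂, .join hf₁ hf₂, ?_⟩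
      beta_reduce
      rw [add_mul, join_right_unit hc (Or.inl h₁), join_right_unit hc (Or.inr h₂)]
  -- local units for T
  have hLU : ∀ r ∈ T, ∃ f, JoinClosure gen f ∧ (f * r = r ∧ r * f = r) := by
    intro r hr
    refine mulSub_induction
      (P := fun r => ∃ f, JoinClosure gen f ∧ (f * r = r ∧ r * f = r)) hr
      (fun a ha b hb => ?_) ?_ ?_ ?_
    · obtain ⟨f₁, hf₁, h₁⟩ := hL a ha
      obtain ⟨f₂, hf₂, h₂⟩ := hR b hb
      have hc := hcomm2 f₁ hf₁ f₂ hf₂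
      refine ⟨f₁ + f₂ - f₁ * f₂, .join hf₁ hf₂, ?_, ?_⟩
      · beta_reduce; rw [← mul_assoc, join_left_unit hc (Or.inl h₁)]
      · rw [mul_assoc, join_right_unit hc (Or.inr h₂)]
    · exact ⟨ε g₀, .base hg₀gen, mul_zero _, zero_mul _⟩
    · rintro u v ⟨f₁, hf₁, h₁l, h₁r⟩ ⟨f₂, hf₂, h₂l, h₂r⟩
      have hc := hcomm2 f₁ hf₁ f₂ hf₂
      refine ⟨f₁ + f₂ - f₁ * f₂, .join hf₁ hf₂, ?_, ?_⟩
      · beta_reduce; rw [mul_add, join_left_unit hc (Or.inl h₁l), join_left_unit hc (Or.inr h₂l)]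
      · rw [add_mul, join_right_unit hc (Or.inl h₁r), join_right_unit hc (Or.inr h₂r)]
    · rintro u ⟨f, hf, hl, hr⟩
      exact ⟨f, hf, by rw [mul_neg, hl], by rw [neg_mul, hr]⟩
  constructor
  · exact ⟨fun e he => (hE e he).2.1, fun e he => (hE e he).2.2.2,
      fun e he f hf => hcomm2 e he f hf,
      fun e he f hf => JoinClosure.join he hf, hLU⟩
  · refine le_antisymm (mulSub_le fun x hx a ha => ?_) (fun a ha => ?_)
    · have h := indComp_mul hmul N (hTsub1 hx) ha
      rwa [one_mul] at h
    · obtain ⟨f, hf, hfa⟩ := hL a ha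
      rw [← hfa]
      exact mul_mem_mulSub (hE f hf).2.1 ha
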